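/- For all integers m ≥ 1 and x ≥ 1, if c′ ∈ C(m+1,x) has its two leftmost bits equal to 00 (Group 1), and c denotes the binary word formed by the m rightmost bits of c′, then c ∈ C(m,x) and g(m+1,x,c′) = g(m,x,c); that is, the shift in codeword indices for Group 1 is ζ₁ = 0. -/

import Mathlib

/-- `noForbidden m x c` says the binary word `c = (c_{m-1}, …, c_0)` contains no contiguous
subword of the form `0 1^y 0` or `1 0^y 1` for any `1 ≤ y ≤ x`. -/
def noForbidden (m x : ℕ) (c : Fin m → Bool) : Prop :=
  ∀ j y : ℕ, 1 ≤ y → y ≤ x → (h : j + y + 1 < m) →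
    ¬ ((∀ k, 1 ≤ k → (hk : k ≤ y) → c ⟨j + k, by omega⟩ = ! c ⟨j, by omega⟩) ∧
        c ⟨j + y + 1, h⟩ = c ⟨j, by omega⟩)

/-- `N(m, x)`: the cardinality of the LOCO code `C(m, x)`. -/
noncomputable def locoN (m x : ℕ) : ℕ := Nat.card {c : Fin m → Bool // noForbidden m x c}

/-- `N(k, x)` extended to integer `k` by the convention `N(k, x) = 2` for `k ≤ 1`. -/
noncomputable def Nex (k : ℤ) (x : ℕ) : ℤ := if k ≤ 1 then 2 else (locoN k.toNat x : ℤ)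

/-- Strict lexicographic order on binary words, comparing bits from `c_{m-1}`
(most significant) down to `c_0`, with `0 < 1`. -/
def lexLt (m : ℕ) (d c : Fin m → Bool) : Prop :=
  ∃ i : Fin m, d i = false ∧ c i = true ∧ ∀ j : Fin m, (i : ℕ) < (j : ℕ) → d j = c j

/-- The index `g(m, x, c)` of a codeword: the number of codewords of `C(m, x)` that
precede `c` in lexicographic order. -/
noncomputable def locoIdx (m x : ℕ) (c : Fin m → Bool) : ℕ :=
  Nat.card {d : Fin m → Bool // noForbidden m x d ∧ lexLt m d c}

/-- For all `m ≥ 1` and `x ≥ 1`, if `c' ∈ C(m + 1, x)` has its two leftmost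
bits equal to `00` (Group 1), and `c` is the word formed by the `m` rightmost bits of `c'`,
then `c ∈ C(m, x)` and `g(m + 1, x, c') = g(m, x, c)`, i.e. the index shift is `ζ₁ = 0`. -/
theorem loco_group1_shift (m x : ℕ) (hm : 1 ≤ m) (hx : 1 ≤ x)
    (c' : Fin (m + 1) → Bool) (hc' : noForbidden (m + 1) x c')
    (h1 : c' ⟨m, by omega⟩ = false) (h2 : c' ⟨m - 1, by omega⟩ = false) :
    noForbidden m x (fun i => c' (Fin.castSucc i)) ∧
    locoIdx (m + 1) x c' = locoIdx m x (fun i => c' (Fin.castSucc i)) := by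
  -- restriction preserves noForbidden
  have restr : ∀ d' : Fin (m+1) → Bool, noForbidden (m+1) x d' →
      noForbidden m x (fun i => d' (Fin.castSucc i)) := by
    intro d' hd' j y hy hyx h hcon
    exact hd' j y hy hyx (by omega)
      ⟨fun k hk hky => hcon.1 k hk hky, hcon.2⟩
  refine ⟨restr c' hc', ?_⟩
  set c : Fin m → Bool := fun i => c' (Fin.castSucc i) with hcdef
  -- top bit of any d' < c' is false
  have key : ∀ d' : Fin (m+1) → Bool, lexLt (m+1) d' c' → d' ⟨m, by omega⟩ = false := by
    intro d' ⟨i, hdi, hci, hj⟩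
    rcases Nat.lt_or_ge (i : ℕ) m with hi | hi
    · rw [hj ⟨m, by omega⟩ hi]; exact h1
    · exfalso
      have : i = ⟨m, by omega⟩ := Fin.ext (show (i:ℕ) = m by omega)
      rw [this, h1] at hci; exact absurd hci (by simp)
  -- bit m-1 of any d < c is false
  have key2 : ∀ d : Fin m → Bool, lexLt m d c → d ⟨m-1, by omega⟩ = false := by
    intro d ⟨i, hdi, hci, hj⟩
    rcases Nat.lt_or_ge (i : ℕ) (m-1) with hi | hi
    · rw [hj ⟨m-1, by omega⟩ hi]
      show c' (Fin.castSucc ⟨m-1, _⟩) = false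
      exact h2
    · have : i = ⟨m-1, by omega⟩ := Fin.ext (show (i:ℕ) = m-1 by omega)
      rw [this] at hci
      exfalso
      have : c' (Fin.castSucc ⟨m-1, by omega⟩) = true := hci
      rw [show (Fin.castSucc (⟨m-1, by omega⟩ : Fin m)) = ⟨m-1, by omega⟩ from rfl, h2] at this
      exact absurd this (by simp)
  -- extension
  set ext : (Fin m → Bool) → (Fin (m+1) → Bool) :=
    fun d i => if h : (i : ℕ) < m then d ⟨i, h⟩ else false with hextdef
  have ext_nf : ∀ d : Fin m → Bool, noForbidden m x d → d ⟨m-1, by omega⟩ = false →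
      noForbidden (m+1) x (ext d) := by
    intro d hd hdm j y hy hyx h hcon
    rcases Nat.lt_or_ge (j + y + 1) m with h' | h'
    · refine hd j y hy hyx h' ⟨fun k hk hky => ?_, ?_⟩
      · have := hcon.1 k hk hky
        simpa [hextdef, Nat.lt_of_le_of_lt (by omega : j + k ≤ j + y + 1) h',
          Nat.lt_of_le_of_lt (by omega : j ≤ j + y + 1) h'] using this
      · have := hcon.2
        simpa [hextdef, h', Nat.lt_of_le_of_lt (by omega : j ≤ j + y + 1) h'] using this
    · have hjy : j + y + 1 = m := by omega
      have htop : ext d ⟨j + y + 1, h⟩ = false := by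
        simp [hextdef, hjy]
      have hmid := hcon.1 y hy le_rfl
      have hjm : j < m := by omega
      have hjym : j + y < m := by omega
      have hme : ext d ⟨j + y, by omega⟩ = false := by
        have : (⟨j + y, by omega⟩ : Fin (m+1)) = ⟨m - 1, by omega⟩ := Fin.ext (show j + y = m - 1 by omega)
        rw [this]
        simpa [hextdef, show m - 1 < m by omega] using hdm
      rw [hme] at hmid
      have hjt : ext d ⟨j, by omega⟩ = true := by
        cases hb : ext d ⟨j, by omega⟩
        · rw [hb] at hmid; simp at hmid
        · rfl
      rw [htop, hjt] at hcon
      exact absurd hcon.2 (by simp)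
  -- the bijection
  have e : {d : Fin (m+1) → Bool // noForbidden (m+1) x d ∧ lexLt (m+1) d c'} ≃
      {d : Fin m → Bool // noForbidden m x d ∧ lexLt m d c} := by
    refine ⟨fun d' => ⟨fun i => d'.1 (Fin.castSucc i), restr d'.1 d'.2.1, ?_⟩,
      fun d => ⟨ext d.1, ext_nf d.1 d.2.1 (key2 d.1 d.2.2), ?_⟩, ?_, ?_⟩
    · -- lexLt restricts
      obtain ⟨i, hdi, hci, hj⟩ := d'.2.2
      have him : (i : ℕ) < m := by
        rcases Nat.lt_or_ge (i : ℕ) m with hi | hi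
        · exact hi
        · exfalso
          have : i = ⟨m, by omega⟩ := Fin.ext (show (i:ℕ) = m by omega)
          rw [this, h1] at hci; exact absurd hci (by simp)
      refine ⟨⟨i, him⟩, ?_, ?_, ?_⟩
      · show d'.1 (Fin.castSucc ⟨i, him⟩) = false
        rwa [show Fin.castSucc (⟨(i:ℕ), him⟩ : Fin m) = i from Fin.ext rfl]
      · show c' (Fin.castSucc ⟨i, him⟩) = true
        rwa [show Fin.castSucc (⟨(i:ℕ), him⟩ : Fin m) = i from Fin.ext rfl]
      · intro j hij
        exact hj (Fin.castSucc j) hij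
    · -- lexLt extends
      obtain ⟨i, hdi, hci, hj⟩ := d.2.2
      refine ⟨Fin.castSucc i, ?_, hci, ?_⟩
      · show ext d.1 (Fin.castSucc i) = false
        simpa [hextdef, i.isLt] using hdi
      · intro j hij
        rcases Nat.lt_or_ge (j : ℕ) m with hjm | hjm
        · have h3 := hj ⟨j, hjm⟩ hij
          have hje : j = Fin.castSucc ⟨(j:ℕ), hjm⟩ := Fin.ext rfl
          rw [hje]
          show ext d.1 (Fin.castSucc ⟨(j:ℕ), hjm⟩) = c' (Fin.castSucc ⟨(j:ℕ), hjm⟩)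
          simp only [hextdef, Fin.coe_castSucc, dif_pos hjm]
          exact h3
        · have : j = ⟨m, by omega⟩ := Fin.ext (show (j:ℕ) = m by omega)
          rw [this, h1]
          simp [hextdef]
    · -- left inverse
      intro d'
      apply Subtype.ext
      funext i
      rcases Nat.lt_or_ge (i : ℕ) m with him | him
      · show ext (fun i => d'.1 (Fin.castSucc i)) i = d'.1 i
        simp only [hextdef, dif_pos him]
        exact congrArg d'.1 (Fin.ext rfl)
      · have : i = ⟨m, by omega⟩ := Fin.ext (show (i:ℕ) = m by omega)
        rw [this, key d'.1 d'.2.2]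
        simp [hextdef]
    · -- right inverse
      intro d
      apply Subtype.ext
      funext i
      show ext d.1 (Fin.castSucc i) = d.1 i
      simp only [hextdef, Fin.coe_castSucc, dif_pos i.isLt]
  exact Nat.card_congr e
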